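/- Let {X_n} satisfy AIM(x_n) with separation sequence q_n and mixing coefficients α_n, suppose n·F̄(x_n) → τ > 0 as n → ∞ with F̄(x_n) > 0 for every n, and let (p_n) be a sequence of positive integers with p_n = o(n), n·α_n = o(p_n) and q_n = o(p_n). Set θ_{i,n} = P(M_{i,i+p_n} ≤ x_n | X_i > x_n), and suppose that for each i the limit θ_i = lim_{n→∞} θ_{i,n} exists, that max_{1≤i≤n} |θ_i − θ_{i,n}| → 0 as n → ∞, and that the Cesàro means (1/n) ∑_{i=1}^{n} θ_i converge to a limit γ. Then P(M_n ≤ x_n) → e^{−τγ} as n → ∞. -/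

import Mathlib

open MeasureTheory Filter Finset Asymptotics

/-- Probability of an event as a real number. -/
noncomputable def pr {Ω : Type*} [MeasurableSpace Ω] (P : Measure Ω) (A : Set Ω) : ℝ :=
  (P A).toReal

/-- The event that `X i ≤ x` for every index `i` in the set `S`;
this is the event `{M(S) ≤ x}` where `M(S) = max {X i : i ∈ S}`. -/
def allLe {Ω : Type*} (X : ℕ → Ω → ℝ) (S : Set ℕ) (x : ℝ) : Set Ω :=
  {ω | ∀ i ∈ S, X i ω ≤ x}

/-- `α` is a sequence of AIM mixing coefficients for `X` relative to thresholds `xs`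
with separation sequence `q`: for any two intervals `I₁ = [a,b]`, `I₂ = [b+qₙ+1, c]`
contained in `{1,…,n}`, separated by `qₙ`, each of cardinality at least `qₙ`,
the maximum-based discrepancy is bounded by `α n`. -/
def AIMBound {Ω : Type*} [MeasurableSpace Ω] (P : Measure Ω) (X : ℕ → Ω → ℝ)
    (xs : ℕ → ℝ) (q : ℕ → ℕ) (α : ℕ → ℝ) : Prop :=
  ∀ n a b c : ℕ, 1 ≤ a → a ≤ b → b + q n + 1 ≤ c → c ≤ n →
    q n ≤ b + 1 - a → q n ≤ c - (b + q n) →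
    |pr P (allLe X (Set.Icc a b ∪ Set.Icc (b + q n + 1) c) (xs n)) -
      pr P (allLe X (Set.Icc a b) (xs n)) *
        pr P (allLe X (Set.Icc (b + q n + 1) c) (xs n))| ≤ α n

set_option linter.unusedSectionVars false


section basic
variable {Ω : Type*} [MeasurableSpace Ω] (P : Measure Ω) [IsProbabilityMeasure P]
  {X : ℕ → Ω → ℝ} {x : ℝ}

lemma allLe_union (X : ℕ → Ω → ℝ) (S T : Set ℕ) (x : ℝ) :
    allLe X (S ∪ T) x = allLe X S x ∩ allLe X T x := by
  ext ω; simp [allLe, or_imp, forall_and]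

lemma allLe_mono (X : ℕ → Ω → ℝ) {S T : Set ℕ} (h : S ⊆ T) (x : ℝ) :
    allLe X T x ⊆ allLe X S x := fun ω hω i hi => hω i (h hi)

lemma measurable_allLe (hm : ∀ i, Measurable (X i)) (S : Set ℕ) :
    MeasurableSet (allLe X S x) := by
  have : allLe X S x = ⋂ i ∈ S, {ω | X i ω ≤ x} := by
    ext ω; simp [allLe]
  rw [this]
  exact MeasurableSet.biInter (Set.to_countable S)
    (fun i _ => measurableSet_le (hm i) measurable_const)

lemma pr_nonneg (A : Set Ω) : 0 ≤ pr P A := ENNReal.toReal_nonneg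

lemma pr_le_one (A : Set Ω) : pr P A ≤ 1 := by
  rw [pr, ← ENNReal.toReal_one]
  exact ENNReal.toReal_mono ENNReal.one_ne_top prob_le_one

lemma pr_mono {A B : Set Ω} (h : A ⊆ B) : pr P A ≤ pr P B :=
  ENNReal.toReal_mono (measure_ne_top P B) (measure_mono h)

lemma pr_split (A : Set Ω) {B : Set Ω} (hB : MeasurableSet B) :
    pr P A = pr P (A ∩ B) + pr P (A \ B) := by
  rw [pr, pr, pr, ← ENNReal.toReal_add (measure_ne_top _ _) (measure_ne_top _ _)]
  congr 1
  exact (measure_inter_add_diff A hB).symm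

lemma pr_univ : pr P (Set.univ : Set Ω) = 1 := by simp [pr]

lemma pr_compl {A : Set Ω} (hA : MeasurableSet A) : pr P Aᶜ = 1 - pr P A := by
  have := pr_split P Set.univ hA
  rw [pr_univ] at this
  simp only [Set.univ_inter] at this
  rw [Set.compl_eq_univ_diff]
  linarith

lemma pr_diff_le {A B : Set Ω} (hB : MeasurableSet B) :
    pr P A - pr P (A ∩ B) ≤ pr P (A \ B) := by
  rw [pr_split P A hB]; linarith [pr_nonneg P (A \ B)]

/-- union bound over a Finset -/
lemma pr_biUnion_le (s : Finset ℕ) (f : ℕ → Set Ω) :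
    pr P (⋃ i ∈ s, f i) ≤ ∑ i ∈ s, pr P (f i) := by
  classical
  induction s using Finset.induction with
  | empty => simp [pr]
  | @insert a s' h ih =>
    rw [Finset.set_biUnion_insert, Finset.sum_insert h]
    calc pr P (f a ∪ ⋃ i ∈ s', f i) ≤ pr P (f a) + pr P (⋃ i ∈ s', f i) := by
          rw [pr, pr, pr, ← ENNReal.toReal_add (measure_ne_top _ _) (measure_ne_top _ _)]
          exact ENNReal.toReal_mono (ENNReal.add_ne_top.2 ⟨measure_ne_top _ _, measure_ne_top _ _⟩) (measure_union_le _ _)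
      _ ≤ _ := by linarith [ih]

end basic

lemma sum_Icc_telescope (g : ℕ → ℝ) (a b : ℕ) (h : a ≤ b + 1) :
    ∑ j ∈ Finset.Icc a b, (g (j+1) - g j) = g (b+1) - g a := by
  rw [show Finset.Icc a b = Finset.Ico a (b+1) by rw [Finset.Ico_add_one_right_eq_Icc], Finset.sum_Ico_eq_sum_range]
  have h2 := Finset.sum_range_sub (fun i => g (a + i)) (b + 1 - a)
  have e : ∀ i, a + i + 1 = a + (i + 1) := by omega
  calc ∑ i ∈ Finset.range (b + 1 - a), (g (a + i + 1) - g (a + i))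
      = ∑ i ∈ Finset.range (b + 1 - a), ((fun i => g (a + i)) (i+1) - (fun i => g (a+i)) i) := by
        apply Finset.sum_congr rfl; intro i _; simp [e i]
    _ = g (a + (b + 1 - a)) - g a := h2
    _ = g (b+1) - g a := by rw [show a + (b + 1 - a) = b + 1 by omega]

lemma prod_sub_prod_le (s : Finset ℕ) (x y : ℕ → ℝ)
    (hx0 : ∀ i ∈ s, 0 ≤ x i) (hx1 : ∀ i ∈ s, x i ≤ 1)
    (hy0 : ∀ i ∈ s, 0 ≤ y i) (hy1 : ∀ i ∈ s, y i ≤ 1) :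
    |∏ i ∈ s, x i - ∏ i ∈ s, y i| ≤ ∑ i ∈ s, |x i - y i| := by
  classical
  induction s using Finset.induction with
  | empty => simp
  | @insert a s' ha ih =>
    rw [Finset.prod_insert ha, Finset.prod_insert ha, Finset.sum_insert ha]
    have hx0' : ∀ i ∈ s', 0 ≤ x i := fun i hi => hx0 i (Finset.mem_insert_of_mem hi)
    have hx1' : ∀ i ∈ s', x i ≤ 1 := fun i hi => hx1 i (Finset.mem_insert_of_mem hi)
    have hy0' : ∀ i ∈ s', 0 ≤ y i := fun i hi => hy0 i (Finset.mem_insert_of_mem hi)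
    have hy1' : ∀ i ∈ s', y i ≤ 1 := fun i hi => hy1 i (Finset.mem_insert_of_mem hi)
    have ihs := ih hx0' hx1' hy0' hy1'
    have hPx0 : 0 ≤ ∏ i ∈ s', x i := Finset.prod_nonneg hx0'
    have hPy0 : 0 ≤ ∏ i ∈ s', y i := Finset.prod_nonneg hy0'
    have hPy1 : ∏ i ∈ s', y i ≤ 1 := Finset.prod_le_one hy0' hy1'
    have hxa0 := hx0 a (Finset.mem_insert_self a s')
    have hxa1 := hx1 a (Finset.mem_insert_self a s')
    calc |x a * ∏ i ∈ s', x i - y a * ∏ i ∈ s', y i|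
        = |x a * (∏ i ∈ s', x i - ∏ i ∈ s', y i) + (x a - y a) * ∏ i ∈ s', y i| := by ring_nf
      _ ≤ |x a * (∏ i ∈ s', x i - ∏ i ∈ s', y i)| + |(x a - y a) * ∏ i ∈ s', y i| := abs_add_le _ _
      _ ≤ |∏ i ∈ s', x i - ∏ i ∈ s', y i| + |x a - y a| := by
          rw [abs_mul, abs_mul]
          have h1 : |x a| ≤ 1 := abs_le.2 ⟨by linarith, hxa1⟩
          have h2 : |∏ i ∈ s', y i| ≤ 1 := abs_le.2 ⟨by linarith, hPy1⟩
          nlinarith [abs_nonneg (∏ i ∈ s', x i - ∏ i ∈ s', y i), abs_nonneg (x a - y a)]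
      _ ≤ _ := by linarith

lemma exp_sub_one_sub (c : ℝ) (h0 : 0 ≤ c) (h1 : c ≤ 1) :
    |(1 - c) - Real.exp (-c)| ≤ c^2 := by
  have := Real.abs_exp_sub_one_sub_id_le (x := -c) (by rw [abs_neg, abs_of_nonneg h0]; exact h1)
  rw [abs_sub_comm]
  calc |Real.exp (-c) - (1 - c)| = |Real.exp (-c) - 1 - (-c)| := by ring_nf
    _ ≤ (-c)^2 := by simpa using this
    _ = c^2 := by ring

lemma exp_sub_exp_le (x y : ℝ) (hx : 0 ≤ x) (hy : 0 ≤ y) :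
    |Real.exp (-x) - Real.exp (-y)| ≤ |x - y| := by
  wlog h : y ≤ x generalizing x y with H
  · rw [abs_sub_comm, abs_sub_comm x y]; exact H y x hy hx (by linarith)
  have h1 : Real.exp (-x) ≤ Real.exp (-y) := Real.exp_le_exp.2 (by linarith)
  rw [abs_of_nonpos (by linarith), abs_of_nonneg (by linarith)]
  have : Real.exp (-y) - Real.exp (-x) = Real.exp (-y) * (1 - Real.exp (-(x - y))) := by
    rw [mul_sub, mul_one, ← Real.exp_add]; ring_nf
  rw [show -(Real.exp (-x) - Real.exp (-y)) = Real.exp (-y) - Real.exp (-x) by ring, this]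
  have h2 : 1 - Real.exp (-(x-y)) ≤ x - y := by
    have := Real.add_one_le_exp (-(x-y)); linarith
  have h3 : Real.exp (-y) ≤ 1 := Real.exp_le_one_iff.2 (by linarith)
  have h4 : 0 ≤ 1 - Real.exp (-(x-y)) := by
    have : Real.exp (-(x-y)) ≤ 1 := Real.exp_le_one_iff.2 (by linarith)
    linarith
  nlinarith [Real.exp_pos (-y)]

section fixedn
variable {Ω : Type*} [MeasurableSpace Ω] (P : Measure Ω) [IsProbabilityMeasure P]
  (X : ℕ → Ω → ℝ) (u : ℝ) (f : ℝ)

lemma insert_Icc_nat {j b : ℕ} (h : j ≤ b) : insert j (Set.Icc (j+1) b) = Set.Icc j b := by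
  ext i; simp only [Set.mem_insert_iff, Set.mem_Icc]; omega

lemma Icc_split_nat {a m c : ℕ} (h1 : a ≤ m + 1) (h2 : m ≤ c) :
    Set.Icc a c = Set.Icc a m ∪ Set.Icc (m+1) c := by
  ext i; simp only [Set.mem_Icc, Set.mem_union]; omega

lemma pr_step (hm : ∀ i, Measurable (X i)) (j : ℕ) (S : Set ℕ) :
    pr P ({ω | u < X j ω} ∩ allLe X S u) =
      pr P (allLe X S u) - pr P (allLe X (insert j S) u) := by
  have hB : MeasurableSet {ω | X j ω ≤ u} := measurableSet_le (hm j) measurable_const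
  have h1 : allLe X (insert j S) u = allLe X S u ∩ {ω | X j ω ≤ u} := by
    ext ω
    simp only [allLe, Set.mem_insert_iff, Set.mem_inter_iff, Set.mem_setOf_eq]
    constructor
    · intro h; exact ⟨fun i hi => h i (Or.inr hi), h j (Or.inl rfl)⟩
    · rintro ⟨h, hj⟩ i (rfl | hi); exacts [hj, h i hi]
  have h2 : {ω | u < X j ω} ∩ allLe X S u = allLe X S u \ {ω | X j ω ≤ u} := by
    ext ω
    simp only [allLe, Set.mem_inter_iff, Set.mem_setOf_eq, Set.mem_diff, not_le]
    tauto
  have h3 := pr_split P (allLe X S u) hB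
  rw [h2, h1]
  linarith

lemma pr_allLe_lb (hm : ∀ i, Measurable (X i))
    (hf : ∀ i, 1 ≤ i → pr P {ω | u < X i ω} = f)
    (a b : ℕ) (ha : 1 ≤ a) :
    1 - pr P (allLe X (Set.Icc a b) u) ≤ ((b + 1 - a : ℕ) : ℝ) * f := by
  have hc : (allLe X (Set.Icc a b) u)ᶜ = ⋃ i ∈ Finset.Icc a b, {ω | u < X i ω} := by
    ext ω
    simp only [allLe, Set.mem_compl_iff, Set.mem_setOf_eq, Set.mem_iUnion, Set.mem_Icc,
      Finset.mem_Icc, not_forall, not_le]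
  have h1 : 1 - pr P (allLe X (Set.Icc a b) u) = pr P ((allLe X (Set.Icc a b) u)ᶜ) := by
    rw [pr_compl P (measurable_allLe hm _)]
  rw [h1, hc]
  calc pr P (⋃ i ∈ Finset.Icc a b, {ω | u < X i ω})
      ≤ ∑ i ∈ Finset.Icc a b, pr P {ω | u < X i ω} := pr_biUnion_le P _ _
    _ = ∑ i ∈ Finset.Icc a b, f := by
        apply Finset.sum_congr rfl
        intro i hi
        exact hf i (le_trans ha (Finset.mem_Icc.1 hi).1)
    _ = ((Finset.Icc a b).card : ℝ) * f := by rw [Finset.sum_const, nsmul_eq_mul]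
    _ = ((b + 1 - a : ℕ) : ℝ) * f := by rw [Nat.card_Icc]

end fixedn

section group
variable {Ω : Type*} [MeasurableSpace Ω] (P : Measure Ω) [IsProbabilityMeasure P]
  (X : ℕ → Ω → ℝ) (u : ℝ) (f : ℝ)

lemma group_est (hm : ∀ i, Measurable (X i)) (hf0 : 0 ≤ f)
    (hf : ∀ i, 1 ≤ i → pr P {ω | u < X i ω} = f)
    (n qq pp c : ℕ) (A : ℝ)
    (haim : ∀ a b c' : ℕ, 1 ≤ a → a ≤ b → b + qq + 1 ≤ c' → c' ≤ n →
      qq ≤ b + 1 - a → qq ≤ c' - (b + qq) →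
      |pr P (allLe X (Set.Icc a b ∪ Set.Icc (b + qq + 1) c') u) -
        pr P (allLe X (Set.Icc a b) u) * pr P (allLe X (Set.Icc (b + qq + 1) c') u)| ≤ A)
    (hq1 : 1 ≤ qq) (hpq : 2 * qq + 2 ≤ pp) (t : ℕ) (htc : (t + 2) * pp ≤ c) (hcn : c ≤ n) :
    ∑ j ∈ Finset.Icc (t * pp + 1) ((t + 1) * pp - 2 * qq),
      (pr P ({ω | u < X j ω} ∩ allLe X (Set.Icc (j + 1) (j + pp)) u) -
       pr P ({ω | u < X j ω} ∩ allLe X (Set.Icc (j + 1) c) u))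
      ≤ (pp * f) * (((c - (t + 1) * pp : ℕ) : ℝ) * f) + 2 * |A| := by
  set b' : ℕ := (t + 1) * pp - qq with hb'
  set bot : ℕ := t * pp + 1 with hbot
  set top : ℕ := (t + 1) * pp - 2 * qq with htop
  have hppt : t * pp + pp = (t+1) * pp := by ring
  have hbb : b' + qq = (t+1) * pp := by omega
  have hcc : (t+1) * pp + pp ≤ c := by
    have : (t+2) * pp = (t+1) * pp + pp := by ring
    omega
  set G : ℕ → ℝ := fun j => pr P (allLe X (Set.Icc j b') u) with hG
  set H : ℕ → ℝ := fun j => pr P (allLe X (Set.Icc j b' ∪ Set.Icc (b' + qq + 1) c) u) with hH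
  set π : ℝ := pr P (allLe X (Set.Icc (b' + qq + 1) c) u) with hπ
  -- per-term bound
  have key : ∀ j ∈ Finset.Icc bot top,
      pr P ({ω | u < X j ω} ∩ allLe X (Set.Icc (j + 1) (j + pp)) u) -
       pr P ({ω | u < X j ω} ∩ allLe X (Set.Icc (j + 1) c) u)
      ≤ (G (j+1) - G j) - (H (j+1) - H j) := by
    intro j hj
    rw [Finset.mem_Icc] at hj
    obtain ⟨hj1, hj2⟩ := hj
    have hjb' : j ≤ b' := by omega
    have hjpc : j + pp ≤ c := by omega
    -- split Icc (j+1) c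
    have hsplit : Set.Icc (j+1) c = Set.Icc (j+1) (j+pp) ∪ Set.Icc (j+pp+1) c :=
      Icc_split_nat (by omega) hjpc
    set W : Set Ω := {ω | u < X j ω} ∩ allLe X (Set.Icc (j + 1) (j + pp)) u with hW
    have e1 : {ω | u < X j ω} ∩ allLe X (Set.Icc (j + 1) c) u
        = W ∩ allLe X (Set.Icc (j+pp+1) c) u := by
      rw [hsplit, allLe_union, hW, Set.inter_assoc]
    have hWsplit := pr_split P W (measurable_allLe hm (Set.Icc (j+pp+1) c) (x := u))
    -- E_j
    set E : Set Ω := {ω | u < X j ω} ∩ allLe X (Set.Icc (j+1) b') u with hE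
    have hWE : W ⊆ E := by
      apply Set.inter_subset_inter_right
      apply allLe_mono
      intro i hi
      simp only [Set.mem_Icc] at *
      omega
    have hI2sub : allLe X (Set.Icc (b' + qq + 1) c) u ⊆ allLe X (Set.Icc (j+pp+1) c) u := by
      apply allLe_mono
      intro i hi
      simp only [Set.mem_Icc] at *
      omega
    have hsub : W \ allLe X (Set.Icc (j+pp+1) c) u ⊆ E \ allLe X (Set.Icc (b' + qq + 1) c) u := by
      intro ω hω
      exact ⟨hWE hω.1, fun h => hω.2 (hI2sub h)⟩
    have hEsplit := pr_split P E (measurable_allLe hm (Set.Icc (b' + qq + 1) c) (x := u))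
    -- identities
    have idE : pr P E = G (j+1) - G j := by
      rw [hE, pr_step P X u hm j (Set.Icc (j+1) b'), insert_Icc_nat hjb']
    have idH : pr P (E ∩ allLe X (Set.Icc (b' + qq + 1) c) u) = H (j+1) - H j := by
      have e2 : E ∩ allLe X (Set.Icc (b' + qq + 1) c) u
          = {ω | u < X j ω} ∩ allLe X (Set.Icc (j+1) b' ∪ Set.Icc (b' + qq + 1) c) u := by
        rw [allLe_union, hE, Set.inter_assoc]
      have e3 : insert j (Set.Icc (j+1) b' ∪ Set.Icc (b' + qq + 1) c)
          = Set.Icc j b' ∪ Set.Icc (b' + qq + 1) c := by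
        rw [← insert_Icc_nat hjb', Set.insert_union]
      rw [e2, pr_step P X u hm j _, e3]
    have step1 : pr P W - pr P (W ∩ allLe X (Set.Icc (j+pp+1) c) u)
        ≤ pr P E - pr P (E ∩ allLe X (Set.Icc (b' + qq + 1) c) u) := by
      have := pr_mono P hsub
      linarith
    rw [e1]
    calc pr P W - pr P (W ∩ allLe X (Set.Icc (j+pp+1) c) u)
        ≤ pr P E - pr P (E ∩ allLe X (Set.Icc (b' + qq + 1) c) u) := step1
      _ = (G (j+1) - G j) - (H (j+1) - H j) := by rw [idE, idH]
  have hbt : bot ≤ top + 1 := by omega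
  have tel1 : ∑ j ∈ Finset.Icc bot top, (G (j+1) - G j) = G (top+1) - G bot :=
    sum_Icc_telescope G bot top hbt
  have tel2 : ∑ j ∈ Finset.Icc bot top, (H (j+1) - H j) = H (top+1) - H bot :=
    sum_Icc_telescope H bot top hbt
  have sum_le : ∑ j ∈ Finset.Icc bot top,
      (pr P ({ω | u < X j ω} ∩ allLe X (Set.Icc (j + 1) (j + pp)) u) -
       pr P ({ω | u < X j ω} ∩ allLe X (Set.Icc (j + 1) c) u))
      ≤ (G (top+1) - G bot) - (H (top+1) - H bot) := by
    calc _ ≤ ∑ j ∈ Finset.Icc bot top, ((G (j+1) - G j) - (H (j+1) - H j)) :=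
          Finset.sum_le_sum key
      _ = _ := by rw [Finset.sum_sub_distrib, tel1, tel2]
  -- AIM at the two endpoints
  have aim1 : |H bot - G bot * π| ≤ A := by
    apply haim bot b' c (by omega) (by omega) (by omega) hcn (by omega) (by omega)
  have aim2 : |H (top+1) - G (top+1) * π| ≤ A := by
    apply haim (top+1) b' c (by omega) (by omega) (by omega) hcn (by omega) (by omega)
  -- bounds on G difference and (1 - π)
  have hGmono : G bot ≤ G (top+1) := by
    apply pr_mono
    apply allLe_mono
    intro i hi
    simp only [Set.mem_Icc] at *
    omega
  have hGdiff : G (top+1) - G bot ≤ (pp : ℝ) * f := by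
    have : G (top+1) - G bot = ∑ j ∈ Finset.Icc bot top, (G (j+1) - G j) := tel1.symm
    rw [this]
    have hcard : (Finset.Icc bot top).card = top + 1 - bot := Nat.card_Icc _ _
    calc ∑ j ∈ Finset.Icc bot top, (G (j+1) - G j)
        ≤ ∑ j ∈ Finset.Icc bot top, f := by
          apply Finset.sum_le_sum
          intro j hj
          rw [Finset.mem_Icc] at hj
          have hjb' : j ≤ b' := by omega
          have idE : G (j+1) - G j =
              pr P ({ω | u < X j ω} ∩ allLe X (Set.Icc (j+1) b') u) := by
            rw [pr_step P X u hm j (Set.Icc (j+1) b'), insert_Icc_nat hjb']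
          rw [idE, ← hf j (by omega)]
          exact pr_mono P Set.inter_subset_left
      _ = ((top + 1 - bot : ℕ) : ℝ) * f := by
          rw [Finset.sum_const, nsmul_eq_mul, Nat.card_Icc]
      _ ≤ (pp : ℝ) * f := by
          apply mul_le_mul_of_nonneg_right _ hf0
          have : top + 1 - bot ≤ pp := by omega
          exact_mod_cast this
  have hπ1 : π ≤ 1 := pr_le_one P _
  have hπlb : 1 - π ≤ ((c - (b' + qq) : ℕ) : ℝ) * f := by
    have := pr_allLe_lb P X u f hm hf (b' + qq + 1) c (by omega)
    have e : c + 1 - (b' + qq + 1) = c - (b' + qq) := by omega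
    rw [e] at this
    exact this
  have hG0 : 0 ≤ G (top+1) - G bot := by linarith
  have hAabs : A ≤ |A| := le_abs_self A
  have e4 : (c - (b' + qq) : ℕ) = c - (t+1) * pp := by omega
  calc ∑ j ∈ Finset.Icc bot top,
      (pr P ({ω | u < X j ω} ∩ allLe X (Set.Icc (j + 1) (j + pp)) u) -
       pr P ({ω | u < X j ω} ∩ allLe X (Set.Icc (j + 1) c) u))
      ≤ (G (top+1) - G bot) - (H (top+1) - H bot) := sum_le
    _ ≤ (G (top+1) - G bot) * (1 - π) + 2 * |A| := by
        have l1 : H (top+1) ≥ G (top+1) * π - |A| := by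
          have := abs_le.1 aim2; linarith
        have l2 : H bot ≤ G bot * π + |A| := by
          have := abs_le.1 aim1; linarith
        nlinarith
    _ ≤ (pp * f) * (((c - (t + 1) * pp : ℕ) : ℝ) * f) + 2 * |A| := by
        have h1 : 1 - π ≤ ((c - (t+1) * pp : ℕ) : ℝ) * f := by rw [← e4]; exact hπlb
        have h2 : 0 ≤ 1 - π := by linarith
        have h3 : 0 ≤ ((c - (t+1) * pp : ℕ) : ℝ) * f := by positivity
        nlinarith
end group

section block
variable {Ω : Type*} [MeasurableSpace Ω] (P : Measure Ω) [IsProbabilityMeasure P]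
  (X : ℕ → Ω → ℝ) (u : ℝ) (f : ℝ)

lemma block_est (hm : ∀ i, Measurable (X i)) (hf0 : 0 ≤ f)
    (hf : ∀ i, 1 ≤ i → pr P {ω | u < X i ω} = f)
    (n qq pp : ℕ) (A : ℝ)
    (haim : ∀ a b c' : ℕ, 1 ≤ a → a ≤ b → b + qq + 1 ≤ c' → c' ≤ n →
      qq ≤ b + 1 - a → qq ≤ c' - (b + qq) →
      |pr P (allLe X (Set.Icc a b ∪ Set.Icc (b + qq + 1) c') u) -
        pr P (allLe X (Set.Icc a b) u) * pr P (allLe X (Set.Icc (b + qq + 1) c') u)| ≤ A)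
    (hq1 : 1 ≤ qq) (hpq : 2 * qq + 2 ≤ pp) (v mm : ℕ) (hm3 : 3 ≤ mm)
    (hcn : (v + mm) * pp ≤ n) :
    |(1 - pr P (allLe X (Set.Icc (v * pp + qq + 1) ((v + mm) * pp)) u)) -
      ∑ j ∈ (Finset.Icc (v+1) (v+mm-2)).biUnion
        (fun t => Finset.Icc (t * pp + 1) ((t + 1) * pp - 2 * qq)),
        pr P ({ω | u < X j ω} ∩ allLe X (Set.Icc (j + 1) (j + pp)) u)|
      ≤ (mm : ℝ) * ((pp * f) * (((mm * pp : ℕ) : ℝ) * f) + 2 * |A|) +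
        ((2 * pp + 2 * qq * mm : ℕ) : ℝ) * f := by
  classical
  set c : ℕ := (v + mm) * pp with hc
  set a0 : ℕ := v * pp + qq + 1 with ha0
  have hppc : v * pp + pp ≤ c ∧ (v + mm - 1) * pp ≤ c := by
    constructor
    · have h1 : (v + 1) * pp ≤ (v + mm) * pp := Nat.mul_le_mul_right pp (by omega)
      have e1 : (v + 1) * pp = v * pp + pp := by ring
      omega
    · exact Nat.mul_le_mul_right pp (by omega)
  have ha0c : a0 ≤ c + 1 := by
    have := hppc.1
    omega
  set T : Finset ℕ := Finset.Icc (v+1) (v+mm-2) with hT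
  set core : ℕ → Finset ℕ := fun t => Finset.Icc (t * pp + 1) ((t + 1) * pp - 2 * qq) with hcore
  set D : Finset ℕ := T.biUnion core with hD
  set g : ℕ → ℝ := fun j => pr P ({ω | u < X j ω} ∩ allLe X (Set.Icc (j + 1) c) u) with hg
  set h : ℕ → ℝ := fun j => pr P ({ω | u < X j ω} ∩ allLe X (Set.Icc (j + 1) (j + pp)) u) with hh
  -- facts about membership in D
  have hmemD : ∀ j ∈ D, a0 ≤ j ∧ j + pp ≤ c ∧ 1 ≤ j := by
    intro j hj
    rw [hD, Finset.mem_biUnion] at hj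
    obtain ⟨t, ht, hjt⟩ := hj
    rw [hT, Finset.mem_Icc] at ht
    rw [hcore, Finset.mem_Icc] at hjt
    have h1 : (v+1) * pp ≤ t * pp := Nat.mul_le_mul_right pp (by omega)
    have h2 : (t+2) * pp ≤ (v + mm) * pp := Nat.mul_le_mul_right pp (by omega)
    have e1 : (v+1) * pp = v * pp + pp := by ring
    have e2 : (t+2) * pp = t * pp + pp + pp := by ring
    have e3 : (t+1) * pp = t * pp + pp := by ring
    refine ⟨by omega, by omega, by omega⟩
  have hDsub : D ⊆ Finset.Icc a0 c := by
    intro j hj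
    have := hmemD j hj
    rw [Finset.mem_Icc]
    omega
  -- Step 1 : telescoping over the block
  set G : ℕ → ℝ := fun j => pr P (allLe X (Set.Icc j c) u) with hG
  have gid : ∀ j ∈ Finset.Icc a0 c, g j = G (j+1) - G j := by
    intro j hj
    rw [Finset.mem_Icc] at hj
    rw [hg, hG]
    simp only []
    rw [pr_step P X u hm j (Set.Icc (j+1) c), insert_Icc_nat hj.2]
  have step1 : 1 - pr P (allLe X (Set.Icc a0 c) u) = ∑ j ∈ Finset.Icc a0 c, g j := by
    rw [Finset.sum_congr rfl gid, sum_Icc_telescope G a0 c ha0c]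
    have e1 : Set.Icc (c+1) c = (∅ : Set ℕ) := by
      ext i; simp only [Set.mem_Icc, Set.mem_empty_iff_false, iff_false]; omega
    have e2 : G (c+1) = 1 := by
      rw [hG]; simp only [e1]
      have : allLe X (∅ : Set ℕ) u = Set.univ := by
        ext ω; simp [allLe]
      rw [this, pr_univ]
    rw [e2]
  -- bounds on g and h
  have hg0 : ∀ j, 0 ≤ g j := fun j => pr_nonneg P _
  have hgf : ∀ j, 1 ≤ j → g j ≤ f := by
    intro j hj
    rw [hg, ← hf j hj]
    exact pr_mono P Set.inter_subset_left
  have hgh : ∀ j ∈ D, g j ≤ h j := by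
    intro j hj
    obtain ⟨h1, h2, h3⟩ := hmemD j hj
    rw [hg, hh]
    apply pr_mono
    apply Set.inter_subset_inter_right
    apply allLe_mono
    intro i hi
    simp only [Set.mem_Icc] at *
    omega
  -- cores are pairwise disjoint
  have hdisj : ∀ t₁ ∈ T, ∀ t₂ ∈ T, t₁ ≠ t₂ → Disjoint (core t₁) (core t₂) := by
    intro t₁ _ t₂ _ hne
    rw [Finset.disjoint_left]
    intro j hj1 hj2
    rw [hcore, Finset.mem_Icc] at hj1 hj2
    rcases Nat.lt_or_ge t₁ t₂ with hlt | hge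
    · have : (t₁+1) * pp ≤ t₂ * pp := Nat.mul_le_mul_right pp (by omega)
      omega
    · have hlt : t₂ < t₁ := by omega
      have : (t₂+1) * pp ≤ t₁ * pp := Nat.mul_le_mul_right pp (by omega)
      omega
  -- Step 4 : sum of deltas over D
  have step4 : ∑ j ∈ D, (h j - g j)
      ≤ (mm : ℝ) * ((pp * f) * (((mm * pp : ℕ) : ℝ) * f) + 2 * |A|) := by
    rw [hD, Finset.sum_biUnion hdisj]
    have hB0 : 0 ≤ (pp * f) * (((mm * pp : ℕ) : ℝ) * f) + 2 * |A| := by positivity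
    calc ∑ t ∈ T, ∑ j ∈ core t, (h j - g j)
        ≤ ∑ t ∈ T, ((pp * f) * (((mm * pp : ℕ) : ℝ) * f) + 2 * |A|) := by
          apply Finset.sum_le_sum
          intro t ht
          rw [hT, Finset.mem_Icc] at ht
          have htc : (t + 2) * pp ≤ c := by
            rw [hc]; exact Nat.mul_le_mul_right pp (by omega)
          have := group_est P X u f hm hf0 hf n qq pp c A haim hq1 hpq t htc (by omega)
          refine le_trans this ?_
          have hsub : (c - (t + 1) * pp : ℕ) ≤ mm * pp := by
            have : v * pp ≤ (t+1) * pp := Nat.mul_le_mul_right pp (by omega)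
            have e : (v + mm) * pp = v * pp + mm * pp := by ring
            omega
          have hcast : ((c - (t + 1) * pp : ℕ) : ℝ) ≤ ((mm * pp : ℕ) : ℝ) := by exact_mod_cast hsub
          have hpf : (0:ℝ) ≤ (pp:ℝ) * f := by positivity
          have h5 : ((c - (t + 1) * pp : ℕ) : ℝ) * f ≤ ((mm * pp : ℕ) : ℝ) * f :=
            mul_le_mul_of_nonneg_right hcast hf0
          have h6 := mul_le_mul_of_nonneg_left h5 hpf
          linarith
      _ ≤ _ := by
          rw [Finset.sum_const, nsmul_eq_mul]
          have : (T.card : ℝ) ≤ (mm : ℝ) := by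
            rw [hT, Nat.card_Icc]
            exact_mod_cast (by omega : v + mm - 2 + 1 - (v+1) ≤ mm)
          nlinarith
  have step4' : 0 ≤ ∑ j ∈ D, (h j - g j) :=
    Finset.sum_nonneg (fun j hj => by linarith [hgh j hj])
  -- Step 3 : sum over block \ D
  have cardD : D.card = (mm - 2) * (pp - 2 * qq) := by
    rw [hD, Finset.card_biUnion hdisj]
    have : ∀ t ∈ T, (core t).card = pp - 2 * qq := by
      intro t _
      rw [hcore, Nat.card_Icc]
      have e3 : (t+1) * pp = t * pp + pp := by ring
      omega
    rw [Finset.sum_congr rfl this, Finset.sum_const, smul_eq_mul, hT, Nat.card_Icc]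
    congr 1
    omega
  have cardRest : (Finset.Icc a0 c \ D).card ≤ 2 * pp + 2 * qq * mm := by
    rw [Finset.card_sdiff_of_subset hDsub, cardD, Nat.card_Icc]
    have e : (v + mm) * pp = v * pp + mm * pp := by ring
    have e2 : (mm - 2) * (pp - 2 * qq) + 2 * pp + 2 * qq * mm ≥ mm * pp := by
      have h1 : 2 * qq ≤ pp := by omega
      have h2 : 2 ≤ mm := by omega
      zify [h1, h2]
      nlinarith
    omega
  have step3 : ∑ j ∈ Finset.Icc a0 c \ D, g j ≤ ((2 * pp + 2 * qq * mm : ℕ) : ℝ) * f := by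
    calc ∑ j ∈ Finset.Icc a0 c \ D, g j ≤ ∑ j ∈ Finset.Icc a0 c \ D, f := by
          apply Finset.sum_le_sum
          intro j hj
          have hj1 : j ∈ Finset.Icc a0 c := (Finset.mem_sdiff.1 hj).1
          rw [Finset.mem_Icc] at hj1
          exact hgf j (by omega)
      _ = ((Finset.Icc a0 c \ D).card : ℝ) * f := by rw [Finset.sum_const, nsmul_eq_mul]
      _ ≤ _ := by
          apply mul_le_mul_of_nonneg_right _ hf0
          exact_mod_cast cardRest
  have step3' : 0 ≤ ∑ j ∈ Finset.Icc a0 c \ D, g j :=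
    Finset.sum_nonneg (fun j _ => hg0 j)
  -- combine
  have split : ∑ j ∈ Finset.Icc a0 c, g j = ∑ j ∈ D, g j + ∑ j ∈ Finset.Icc a0 c \ D, g j := by
    rw [add_comm, Finset.sum_sdiff hDsub]
  have main : (1 - pr P (allLe X (Set.Icc a0 c) u)) - ∑ j ∈ D, h j
      = ∑ j ∈ Finset.Icc a0 c \ D, g j - ∑ j ∈ D, (h j - g j) := by
    rw [step1, split, Finset.sum_sub_distrib]
    ring
  rw [abs_le]
  constructor
  · rw [main]
    have := step4
    have h2 : (0:ℝ) ≤ ((2 * pp + 2 * qq * mm : ℕ) : ℝ) * f := by positivity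
    linarith
  · rw [main]
    have h2 : (0:ℝ) ≤ (mm : ℝ) * ((pp * f) * (((mm * pp : ℕ) : ℝ) * f) + 2 * |A|) := by positivity
    linarith

end block

section factor
variable {Ω : Type*} [MeasurableSpace Ω] (P : Measure Ω) [IsProbabilityMeasure P]
  (X : ℕ → Ω → ℝ) (u : ℝ) (f : ℝ)

lemma allLe_empty : allLe X (∅ : Set ℕ) u = Set.univ := by
  ext ω; simp [allLe]

lemma pr_inter_ge {A B : Set Ω} (hB : MeasurableSet B) :
    pr P A - (1 - pr P B) ≤ pr P (A ∩ B) := by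
  have h1 := pr_split P A hB
  have h2 : pr P (A \ B) ≤ pr P Bᶜ := pr_mono P (fun ω hω => hω.2)
  have h3 := pr_compl P hB
  linarith

lemma pr_gap_ge (hm : ∀ i, Measurable (X i))
    (hf : ∀ i, 1 ≤ i → pr P {ω | u < X i ω} = f)
    (S : Set ℕ) (a b : ℕ) (ha : 1 ≤ a) :
    pr P (allLe X S u) - ((b + 1 - a : ℕ) : ℝ) * f ≤ pr P (allLe X (S ∪ Set.Icc a b) u) := by
  rw [allLe_union]
  have h1 := pr_inter_ge P (A := allLe X S u) (measurable_allLe hm (Set.Icc a b) (x := u))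
  have h2 := pr_allLe_lb P X u f hm hf a b ha
  linarith

lemma factor_est (hm : ∀ i, Measurable (X i)) (hf0 : 0 ≤ f)
    (hf : ∀ i, 1 ≤ i → pr P {ω | u < X i ω} = f)
    (n qq : ℕ) (A : ℝ)
    (haim : ∀ a b c' : ℕ, 1 ≤ a → a ≤ b → b + qq + 1 ≤ c' → c' ≤ n →
      qq ≤ b + 1 - a → qq ≤ c' - (b + qq) →
      |pr P (allLe X (Set.Icc a b ∪ Set.Icc (b + qq + 1) c') u) -
        pr P (allLe X (Set.Icc a b) u) * pr P (allLe X (Set.Icc (b + qq + 1) c') u)| ≤ A)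
    (r : ℕ) (hq1 : 1 ≤ qq) (hrq : 2 * qq + 1 ≤ r) (k : ℕ) (hkn : k * r ≤ n) :
    |pr P (allLe X (Set.Icc 1 (k * r)) u) -
      ∏ s ∈ Finset.Icc 1 k, pr P (allLe X (Set.Icc ((s-1) * r + qq + 1) (s * r)) u)|
      ≤ (k : ℝ) * (|A| + (qq : ℝ) * f) := by
  classical
  set aa : ℕ → ℝ := fun w => pr P (allLe X (Set.Icc 1 (w * r)) u) with haa
  set bb : ℕ → ℝ := fun s => pr P (allLe X (Set.Icc ((s-1) * r + qq + 1) (s * r)) u) with hbb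
  have hqf0 : (0:ℝ) ≤ (qq : ℝ) * f := by positivity
  have aa0 : aa 0 = 1 := by
    rw [haa]
    simp only []
    have e2 : Set.Icc 1 (0 * r) = (∅ : Set ℕ) := by
      ext i; simp only [Set.mem_Icc, Set.mem_empty_iff_false, iff_false]; omega
    rw [e2, allLe_empty, pr_univ]
  have step : ∀ w : ℕ, w + 1 ≤ k → |aa (w+1) - aa w * bb (w+1)| ≤ |A| + (qq : ℝ) * f := by
    intro w hwk
    have e1 : (w + 1) * r = w * r + r := by ring
    set U : Set ℕ := Set.Icc 1 (w * r) ∪ Set.Icc (w * r + qq + 1) ((w+1) * r) with hU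
    have esplit : Set.Icc 1 ((w+1) * r) = U ∪ Set.Icc (w * r + 1) (w * r + qq) := by
      rw [hU]
      ext i
      simp only [Set.mem_Icc, Set.mem_union]
      omega
    have ebb : bb (w+1) = pr P (allLe X (Set.Icc (w * r + qq + 1) ((w+1) * r)) u) := by
      rw [hbb]
      norm_num
    have hUa : |pr P (allLe X U u) - aa w * bb (w+1)| ≤ |A| := by
      rcases Nat.eq_zero_or_pos w with hw0 | hwpos
      · subst hw0
        have e2 : Set.Icc 1 (0 * r) = (∅ : Set ℕ) := by
          ext i; simp only [Set.mem_Icc, Set.mem_empty_iff_false, iff_false]; omega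
        have e4 : U = Set.Icc (0 * r + qq + 1) ((0+1) * r) := by
          rw [hU, e2, Set.empty_union]
        rw [e4, aa0, one_mul, ebb]
        simp only [Nat.zero_mul]
        rw [sub_self, abs_zero]
        exact abs_nonneg A
      · have h6 : r ≤ w * r := Nat.le_mul_of_pos_left r hwpos
        have h7 : (w+1) * r ≤ k * r := Nat.mul_le_mul_right r hwk
        have h := haim 1 (w * r) ((w+1) * r) le_rfl (by omega) (by omega) (by omega)
          (by omega) (by omega)
        rw [hU, ebb]
        exact le_trans h (le_abs_self A)
    have hgap1 : pr P (allLe X U u) - (qq : ℝ) * f ≤ aa (w+1) := by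
      have hgg := pr_gap_ge P X u f hm hf U (w * r + 1) (w * r + qq) (by omega)
      have e6 : (w * r + qq + 1 - (w * r + 1) : ℕ) = qq := by omega
      rw [e6] at hgg
      rw [haa]
      simp only []
      rw [esplit]
      exact hgg
    have hgap2 : aa (w+1) ≤ pr P (allLe X U u) := by
      rw [haa]
      simp only []
      rw [esplit]
      exact pr_mono P (allLe_mono X Set.subset_union_left u)
    have habs := abs_le.1 hUa
    rw [abs_le]
    exact ⟨by linarith [habs.1], by linarith [habs.2]⟩
  have ind : ∀ w : ℕ, w ≤ k →
      |aa w - ∏ s ∈ Finset.Icc 1 w, bb s| ≤ (w : ℝ) * (|A| + (qq : ℝ) * f) := by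
    intro w
    induction w with
    | zero =>
      intro _
      simp only [Finset.Icc_self, Nat.cast_zero, zero_mul]
      rw [show Finset.Icc 1 0 = (∅ : Finset ℕ) by rfl, Finset.prod_empty, aa0, sub_self, abs_zero]
    | succ w ih =>
      intro hwk
      have ihw := ih (by omega)
      have hstep := step w hwk
      have eprod : ∏ s ∈ Finset.Icc 1 (w+1), bb s = (∏ s ∈ Finset.Icc 1 w, bb s) * bb (w+1) :=
        Finset.prod_Icc_succ_top (by omega) bb
      have hb0 : 0 ≤ bb (w+1) := pr_nonneg P _
      have hb1 : bb (w+1) ≤ 1 := pr_le_one P _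
      calc |aa (w+1) - ∏ s ∈ Finset.Icc 1 (w+1), bb s|
          ≤ |aa (w+1) - aa w * bb (w+1)| +
            |aa w * bb (w+1) - ∏ s ∈ Finset.Icc 1 (w+1), bb s| := abs_sub_le _ _ _
        _ ≤ (|A| + (qq:ℝ) * f) + |aa w - ∏ s ∈ Finset.Icc 1 w, bb s| * bb (w+1) := by
            rw [eprod]
            have : aa w * bb (w+1) - (∏ s ∈ Finset.Icc 1 w, bb s) * bb (w+1)
                = (aa w - ∏ s ∈ Finset.Icc 1 w, bb s) * bb (w+1) := by ring
            rw [this, abs_mul, abs_of_nonneg hb0]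
            linarith
        _ ≤ (|A| + (qq:ℝ) * f) + (w : ℝ) * (|A| + (qq:ℝ) * f) := by
            have h1 : |aa w - ∏ s ∈ Finset.Icc 1 w, bb s| * bb (w+1)
                ≤ |aa w - ∏ s ∈ Finset.Icc 1 w, bb s| * 1 :=
              mul_le_mul_of_nonneg_left hb1 (abs_nonneg _)
            rw [mul_one] at h1
            linarith
        _ = ((w+1 : ℕ) : ℝ) * (|A| + (qq:ℝ) * f) := by push_cast; ring
  exact ind k le_rfl

end factor

section mainest
variable {Ω : Type*} [MeasurableSpace Ω] (P : Measure Ω) [IsProbabilityMeasure P]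
  (X : ℕ → Ω → ℝ) (u : ℝ) (f : ℝ)

lemma main_est (hm : ∀ i, Measurable (X i)) (hf0 : 0 ≤ f)
    (hf : ∀ i, 1 ≤ i → pr P {ω | u < X i ω} = f)
    (n qq pp : ℕ) (A : ℝ)
    (haim : ∀ a b c' : ℕ, 1 ≤ a → a ≤ b → b + qq + 1 ≤ c' → c' ≤ n →
      qq ≤ b + 1 - a → qq ≤ c' - (b + qq) →
      |pr P (allLe X (Set.Icc a b ∪ Set.Icc (b + qq + 1) c') u) -
        pr P (allLe X (Set.Icc a b) u) * pr P (allLe X (Set.Icc (b + qq + 1) c') u)| ≤ A)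
    (θf : ℕ → ℝ)
    (hθf : ∀ j, 1 ≤ j →
      pr P ({ω | u < X j ω} ∩ allLe X (Set.Icc (j + 1) (j + pp)) u) = f * θf j)
    (hθ0 : ∀ j, 1 ≤ j → 0 ≤ θf j) (hθ1 : ∀ j, 1 ≤ j → θf j ≤ 1)
    (k mm : ℕ) (hk1 : 1 ≤ k) (hq1 : 1 ≤ qq) (hpq : 2 * qq + 2 ≤ pp) (hm3 : 3 ≤ mm)
    (hkr : k * (mm * pp) ≤ n) (hnr : n < k * (mm * pp) + k * pp)
    (hhalf : ((mm * pp : ℕ) : ℝ) * f ≤ 1/2) :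
    |pr P (allLe X (Set.Icc 1 n) u) -
        Real.exp (-(f * ∑ i ∈ Finset.Icc 1 n, θf i))|
      ≤ ((k * pp : ℕ) : ℝ) * f + (k : ℝ) * (|A| + (qq : ℝ) * f)
        + (k : ℝ) * ((mm : ℝ) * ((pp * f) * (((mm * pp : ℕ) : ℝ) * f) + 2 * |A|) +
            ((2 * pp + 2 * qq * mm : ℕ) : ℝ) * f)
        + (k : ℝ) * (((mm * pp : ℕ) : ℝ) * f)^2
        + ((3 * k * pp + 2 * k * qq * mm : ℕ) : ℝ) * f := by
  classical
  set r : ℕ := mm * pp with hr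
  set bb : ℕ → ℝ := fun s => pr P (allLe X (Set.Icc ((s-1) * r + qq + 1) (s * r)) u) with hbb
  set hval : ℕ → ℝ :=
    fun j => pr P ({ω | u < X j ω} ∩ allLe X (Set.Icc (j + 1) (j + pp)) u) with hhval
  set core : ℕ → Finset ℕ := fun t => Finset.Icc (t * pp + 1) ((t + 1) * pp - 2 * qq) with hcore
  set DD : ℕ → Finset ℕ :=
    fun s => (Finset.Icc ((s-1) * mm + 1) ((s-1) * mm + mm - 2)).biUnion core with hDD
  set cc : ℕ → ℝ := fun s => ∑ j ∈ DD s, hval j with hcc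
  have hrpos : 1 ≤ r := by
    rw [hr]; exact Nat.one_le_iff_ne_zero.2 (Nat.mul_ne_zero (by omega) (by omega))
  -- membership facts for DD s
  have hmemDD : ∀ s, 1 ≤ s → ∀ j ∈ DD s, (s-1) * r + qq + 1 ≤ j ∧ j + pp ≤ s * r ∧ 1 ≤ j := by
    intro s hs j hj
    rw [hDD, Finset.mem_biUnion] at hj
    obtain ⟨t, ht, hjt⟩ := hj
    rw [Finset.mem_Icc] at ht hjt
    have e0 : (s-1) * r = ((s-1) * mm) * pp := by rw [hr]; ring
    have e1 : s * r = ((s-1) * mm + mm) * pp := by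
      obtain ⟨w, rfl⟩ := Nat.exists_eq_add_of_le hs
      rw [hr]
      have e : 1 + w - 1 = w := by omega
      rw [e]; ring
    have h1 : ((s-1) * mm + 1) * pp ≤ t * pp := Nat.mul_le_mul_right pp (by omega)
    have h2 : (t+2) * pp ≤ ((s-1) * mm + mm) * pp := Nat.mul_le_mul_right pp (by omega)
    have e2 : ((s-1) * mm + 1) * pp = ((s-1) * mm) * pp + pp := by ring
    have e3 : (t+2) * pp = t * pp + pp + pp := by ring
    have e4 : (t+1) * pp = t * pp + pp := by ring
    refine ⟨by omega, by omega, by omega⟩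
  -- Step I : tail
  have hstep1 : |pr P (allLe X (Set.Icc 1 n) u) - pr P (allLe X (Set.Icc 1 (k * r)) u)|
      ≤ ((k * pp : ℕ) : ℝ) * f := by
    have esplit : Set.Icc 1 n = Set.Icc 1 (k * r) ∪ Set.Icc (k * r + 1) n := by
      ext i; simp only [Set.mem_Icc, Set.mem_union]; omega
    have h1 : pr P (allLe X (Set.Icc 1 n) u) ≤ pr P (allLe X (Set.Icc 1 (k * r)) u) := by
      rw [esplit]
      exact pr_mono P (allLe_mono X Set.subset_union_left u)
    have h2 := pr_gap_ge P X u f hm hf (Set.Icc 1 (k * r)) (k * r + 1) n (by omega)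
    rw [← esplit] at h2
    have hcard : ((n + 1 - (k * r + 1) : ℕ) : ℝ) * f ≤ ((k * pp : ℕ) : ℝ) * f := by
      apply mul_le_mul_of_nonneg_right _ hf0
      exact_mod_cast (by omega : n + 1 - (k * r + 1) ≤ k * pp)
    rw [abs_le]
    constructor <;> [linarith; linarith]
  -- Step II : factorization
  have hstep2 : |pr P (allLe X (Set.Icc 1 (k * r)) u) - ∏ s ∈ Finset.Icc 1 k, bb s|
      ≤ (k : ℝ) * (|A| + (qq : ℝ) * f) := by
    have hppr : pp ≤ r := by rw [hr]; exact Nat.le_mul_of_pos_left pp (by omega)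
    exact factor_est P X u f hm hf0 hf n qq A haim r hq1 (by omega) k hkr
  -- Step III/IV : block estimates
  have hblock : ∀ s ∈ Finset.Icc 1 k, |bb s - (1 - cc s)|
      ≤ (mm : ℝ) * ((pp * f) * (((mm * pp : ℕ) : ℝ) * f) + 2 * |A|) +
        ((2 * pp + 2 * qq * mm : ℕ) : ℝ) * f := by
    intro s hs
    rw [Finset.mem_Icc] at hs
    set v : ℕ := (s-1) * mm with hv
    have e0 : (s-1) * r = v * pp := by rw [hr, hv]; ring
    have e1 : s * r = (v + mm) * pp := by
      obtain ⟨w, rfl⟩ := Nat.exists_eq_add_of_le hs.1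
      rw [hr, hv]
      have e : 1 + w - 1 = w := by omega
      rw [e]; ring
    have hbe := block_est P X u f hm hf0 hf n qq pp A haim hq1 hpq v mm hm3
      (by rw [← e1]; calc s * r ≤ k * r := Nat.mul_le_mul_right r hs.2
                        _ ≤ n := hkr)
    have ebb : bb s = pr P (allLe X (Set.Icc (v * pp + qq + 1) ((v + mm) * pp)) u) := by
      rw [hbb]; simp only []; rw [e0, e1]
    have ecc : cc s = ∑ j ∈ (Finset.Icc (v+1) (v+mm-2)).biUnion core, hval j := by
      rw [hcc, hDD, hv]
    rw [ebb, ecc]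
    have e5 : pr P (allLe X (Set.Icc (v * pp + qq + 1) ((v + mm) * pp)) u) -
        (1 - ∑ j ∈ (Finset.Icc (v+1) (v+mm-2)).biUnion core, hval j)
        = -((1 - pr P (allLe X (Set.Icc (v * pp + qq + 1) ((v + mm) * pp)) u)) -
          ∑ j ∈ (Finset.Icc (v+1) (v+mm-2)).biUnion core, hval j) := by ring
    rw [e5, abs_neg]
    exact hbe
  have Eb0 : 0 ≤ (mm : ℝ) * ((pp * f) * (((mm * pp : ℕ) : ℝ) * f) + 2 * |A|) +
      ((2 * pp + 2 * qq * mm : ℕ) : ℝ) * f := by positivity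
  -- bounds on cc
  have hhval0 : ∀ j, 0 ≤ hval j := fun j => pr_nonneg P _
  have hhvalf : ∀ j, 1 ≤ j → hval j ≤ f := by
    intro j hj
    rw [hhval, ← hf j hj]
    exact pr_mono P Set.inter_subset_left
  have hcc0 : ∀ s, 0 ≤ cc s := fun s => Finset.sum_nonneg (fun j _ => hhval0 j)
  -- disjointness of cores within a block
  have hdisjcore : ∀ s : ℕ, ∀ t₁ ∈ Finset.Icc ((s-1) * mm + 1) ((s-1) * mm + mm - 2),
      ∀ t₂ ∈ Finset.Icc ((s-1) * mm + 1) ((s-1) * mm + mm - 2), t₁ ≠ t₂ →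
      Disjoint (core t₁) (core t₂) := by
    intro s t₁ _ t₂ _ hne
    rw [Finset.disjoint_left]
    intro j hj1 hj2
    rw [hcore, Finset.mem_Icc] at hj1 hj2
    rcases Nat.lt_or_ge t₁ t₂ with hlt | hge
    · have : (t₁+1) * pp ≤ t₂ * pp := Nat.mul_le_mul_right pp (by omega)
      omega
    · have hlt : t₂ < t₁ := by omega
      have : (t₂+1) * pp ≤ t₁ * pp := Nat.mul_le_mul_right pp (by omega)
      omega
  have hcardDD : ∀ s, (DD s).card = (mm - 2) * (pp - 2 * qq) := by
    intro s
    rw [hDD, Finset.card_biUnion (hdisjcore s)]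
    have hc : ∀ t ∈ Finset.Icc ((s-1) * mm + 1) ((s-1) * mm + mm - 2),
        (core t).card = pp - 2 * qq := by
      intro t _
      rw [hcore]
      simp only []
      rw [Nat.card_Icc]
      have e4 : (t+1) * pp = t * pp + pp := by ring
      omega
    rw [Finset.sum_congr rfl hc, Finset.sum_const, smul_eq_mul, Nat.card_Icc]
    have e : (s-1) * mm + mm - 2 + 1 - ((s-1) * mm + 1) = mm - 2 := by omega
    rw [e]
  have hccub : ∀ s, 1 ≤ s → cc s ≤ ((mm * pp : ℕ) : ℝ) * f := by
    intro s hs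
    rw [hcc]
    calc ∑ j ∈ DD s, hval j ≤ ∑ j ∈ DD s, f := by
          apply Finset.sum_le_sum
          intro j hj
          exact hhvalf j (hmemDD s hs j hj).2.2
      _ = ((DD s).card : ℝ) * f := by rw [Finset.sum_const, nsmul_eq_mul]
      _ ≤ ((mm * pp : ℕ) : ℝ) * f := by
          apply mul_le_mul_of_nonneg_right _ hf0
          rw [hcardDD s]
          exact_mod_cast Nat.mul_le_mul (by omega) (by omega)
  -- Step IV : products
  have hstep4 : |∏ s ∈ Finset.Icc 1 k, bb s - ∏ s ∈ Finset.Icc 1 k, (1 - cc s)|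
      ≤ (k : ℝ) * ((mm : ℝ) * ((pp * f) * (((mm * pp : ℕ) : ℝ) * f) + 2 * |A|) +
          ((2 * pp + 2 * qq * mm : ℕ) : ℝ) * f) := by
    have hb := prod_sub_prod_le (Finset.Icc 1 k) bb (fun s => 1 - cc s)
      (fun s _ => pr_nonneg P _) (fun s _ => pr_le_one P _)
      (fun s hs => by
        show (0:ℝ) ≤ 1 - cc s
        have := hccub s (Finset.mem_Icc.1 hs).1
        linarith)
      (fun s _ => by show 1 - cc s ≤ (1:ℝ); linarith [hcc0 s])
    refine le_trans hb (le_trans (Finset.sum_le_sum hblock) ?_)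
    rw [Finset.sum_const, nsmul_eq_mul, Nat.card_Icc, Nat.add_sub_cancel]
  -- Step V : product vs exp
  have hstep5 : |∏ s ∈ Finset.Icc 1 k, (1 - cc s) - Real.exp (-(∑ s ∈ Finset.Icc 1 k, cc s))|
      ≤ (k : ℝ) * (((mm * pp : ℕ) : ℝ) * f)^2 := by
    have heq : Real.exp (-(∑ s ∈ Finset.Icc 1 k, cc s))
        = ∏ s ∈ Finset.Icc 1 k, Real.exp (-(cc s)) := by
      rw [← Real.exp_sum]
      congr 1
      rw [Finset.sum_neg_distrib]
    rw [heq]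
    have hb := prod_sub_prod_le (Finset.Icc 1 k) (fun s => 1 - cc s)
      (fun s => Real.exp (-(cc s)))
      (fun s hs => by
        show (0:ℝ) ≤ 1 - cc s
        have := hccub s (Finset.mem_Icc.1 hs).1
        linarith)
      (fun s _ => by show 1 - cc s ≤ (1:ℝ); linarith [hcc0 s])
      (fun s _ => le_of_lt (Real.exp_pos _))
      (fun s _ => Real.exp_le_one_iff.2 (by show -cc s ≤ 0; linarith [hcc0 s]))
    have hsum : ∑ s ∈ Finset.Icc 1 k, |(1 - cc s) - Real.exp (-(cc s))|
        ≤ (k : ℝ) * (((mm * pp : ℕ) : ℝ) * f)^2 := by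
      calc ∑ s ∈ Finset.Icc 1 k, |(1 - cc s) - Real.exp (-(cc s))|
          ≤ ∑ s ∈ Finset.Icc 1 k, (((mm * pp : ℕ) : ℝ) * f)^2 := by
            apply Finset.sum_le_sum
            intro s hs
            have hs1 := (Finset.mem_Icc.1 hs).1
            have h1 := exp_sub_one_sub (cc s) (hcc0 s) (by linarith [hccub s hs1, hhalf])
            refine le_trans h1 ?_
            have h2 := hccub s hs1
            have h3 := hcc0 s
            have h4 : (0:ℝ) ≤ ((mm * pp : ℕ) : ℝ) * f := by positivity
            nlinarith
        _ = (k : ℝ) * (((mm * pp : ℕ) : ℝ) * f)^2 := by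
            rw [Finset.sum_const, nsmul_eq_mul, Nat.card_Icc, Nat.add_sub_cancel]
    exact le_trans hb hsum
  -- Step VI : exponents
  set bigD : Finset ℕ := (Finset.Icc 1 k).biUnion DD with hbigD
  have hdisjDD : ∀ s₁ ∈ Finset.Icc 1 k, ∀ s₂ ∈ Finset.Icc 1 k, s₁ ≠ s₂ →
      Disjoint (DD s₁) (DD s₂) := by
    intro s₁ hs₁ s₂ hs₂ hne
    rw [Finset.mem_Icc] at hs₁ hs₂
    rw [Finset.disjoint_left]
    intro j hj1 hj2
    have m1 := hmemDD s₁ hs₁.1 j hj1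
    have m2 := hmemDD s₂ hs₂.1 j hj2
    rcases Nat.lt_or_ge s₁ s₂ with hlt | hge
    · have : s₁ * r ≤ (s₂ - 1) * r := Nat.mul_le_mul_right r (by omega)
      omega
    · have hlt : s₂ < s₁ := by omega
      have : s₂ * r ≤ (s₁ - 1) * r := Nat.mul_le_mul_right r (by omega)
      omega
  have hbigDsub : bigD ⊆ Finset.Icc 1 n := by
    intro j hj
    rw [hbigD, Finset.mem_biUnion] at hj
    obtain ⟨s, hs, hjs⟩ := hj
    rw [Finset.mem_Icc] at hs
    have := hmemDD s hs.1 j hjs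
    have h2 : s * r ≤ k * r := Nat.mul_le_mul_right r hs.2
    rw [Finset.mem_Icc]
    omega
  have hsumcc : ∑ s ∈ Finset.Icc 1 k, cc s = ∑ j ∈ bigD, hval j := by
    rw [hbigD, Finset.sum_biUnion hdisjDD]
  have hcardbigD : bigD.card = k * ((mm - 2) * (pp - 2 * qq)) := by
    rw [hbigD, Finset.card_biUnion hdisjDD]
    rw [Finset.sum_congr rfl (fun s _ => hcardDD s), Finset.sum_const, smul_eq_mul,
      Nat.card_Icc, Nat.add_sub_cancel]
  have hcardrest : (Finset.Icc 1 n \ bigD).card ≤ 3 * k * pp + 2 * k * qq * mm := by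
    rw [Finset.card_sdiff_of_subset hbigDsub, hcardbigD, Nat.card_Icc]
    have h1 : 2 * qq ≤ pp := by omega
    have h2 : 2 ≤ mm := by omega
    have key : k * ((mm - 2) * (pp - 2 * qq)) + (3 * k * pp + 2 * k * qq * mm)
        ≥ k * (mm * pp) + k * pp := by
      zify [h1, h2]
      nlinarith [(by exact_mod_cast hk1 : (1:ℤ) ≤ (k:ℤ)), (by positivity : (0:ℤ) ≤ (qq:ℤ)),
        (by positivity : (0:ℤ) ≤ (pp:ℤ)), (by positivity : (0:ℤ) ≤ (mm:ℤ))]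
    have hrkey : k * r = k * (mm * pp) := by rw [hr]
    omega
  have hexps : |(∑ s ∈ Finset.Icc 1 k, cc s) - f * ∑ i ∈ Finset.Icc 1 n, θf i|
      ≤ ((3 * k * pp + 2 * k * qq * mm : ℕ) : ℝ) * f := by
    have hθsum : f * ∑ i ∈ Finset.Icc 1 n, θf i = ∑ i ∈ Finset.Icc 1 n, hval i := by
      rw [Finset.mul_sum]
      apply Finset.sum_congr rfl
      intro i hi
      rw [Finset.mem_Icc] at hi
      rw [hhval]
      exact (hθf i hi.1).symm
    rw [hθsum, hsumcc]
    have hsplit : ∑ i ∈ Finset.Icc 1 n, hval i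
        = ∑ j ∈ bigD, hval j + ∑ j ∈ Finset.Icc 1 n \ bigD, hval j := by
      rw [add_comm, Finset.sum_sdiff hbigDsub]
    have h1 : 0 ≤ ∑ j ∈ Finset.Icc 1 n \ bigD, hval j :=
      Finset.sum_nonneg (fun j _ => hhval0 j)
    have h2 : ∑ j ∈ Finset.Icc 1 n \ bigD, hval j
        ≤ ((3 * k * pp + 2 * k * qq * mm : ℕ) : ℝ) * f := by
      calc ∑ j ∈ Finset.Icc 1 n \ bigD, hval j ≤ ∑ j ∈ Finset.Icc 1 n \ bigD, f := by
            apply Finset.sum_le_sum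
            intro j hj
            have hj1 := (Finset.mem_sdiff.1 hj).1
            rw [Finset.mem_Icc] at hj1
            exact hhvalf j hj1.1
        _ = ((Finset.Icc 1 n \ bigD).card : ℝ) * f := by rw [Finset.sum_const, nsmul_eq_mul]
        _ ≤ _ := by
            apply mul_le_mul_of_nonneg_right _ hf0
            exact_mod_cast hcardrest
    rw [abs_le]
    constructor <;> [linarith [hsplit]; linarith [hsplit]]
  have hsumcc0 : 0 ≤ ∑ s ∈ Finset.Icc 1 k, cc s :=
    Finset.sum_nonneg (fun s _ => hcc0 s)
  have hθsum0 : 0 ≤ f * ∑ i ∈ Finset.Icc 1 n, θf i := by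
    apply mul_nonneg hf0
    apply Finset.sum_nonneg
    intro i hi
    exact hθ0 i (Finset.mem_Icc.1 hi).1
  have hstep6 : |Real.exp (-(∑ s ∈ Finset.Icc 1 k, cc s)) -
      Real.exp (-(f * ∑ i ∈ Finset.Icc 1 n, θf i))|
      ≤ ((3 * k * pp + 2 * k * qq * mm : ℕ) : ℝ) * f :=
    le_trans (exp_sub_exp_le _ _ hsumcc0 hθsum0) hexps
  -- combine everything
  calc |pr P (allLe X (Set.Icc 1 n) u) - Real.exp (-(f * ∑ i ∈ Finset.Icc 1 n, θf i))|
      ≤ |pr P (allLe X (Set.Icc 1 n) u) - pr P (allLe X (Set.Icc 1 (k * r)) u)|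
        + |pr P (allLe X (Set.Icc 1 (k * r)) u) - ∏ s ∈ Finset.Icc 1 k, bb s|
        + |∏ s ∈ Finset.Icc 1 k, bb s - ∏ s ∈ Finset.Icc 1 k, (1 - cc s)|
        + |∏ s ∈ Finset.Icc 1 k, (1 - cc s) - Real.exp (-(∑ s ∈ Finset.Icc 1 k, cc s))|
        + |Real.exp (-(∑ s ∈ Finset.Icc 1 k, cc s)) -
            Real.exp (-(f * ∑ i ∈ Finset.Icc 1 n, θf i))| := by
        have t1 := abs_sub_le (pr P (allLe X (Set.Icc 1 n) u))
          (pr P (allLe X (Set.Icc 1 (k * r)) u))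
          (Real.exp (-(f * ∑ i ∈ Finset.Icc 1 n, θf i)))
        have t2 := abs_sub_le (pr P (allLe X (Set.Icc 1 (k * r)) u))
          (∏ s ∈ Finset.Icc 1 k, bb s)
          (Real.exp (-(f * ∑ i ∈ Finset.Icc 1 n, θf i)))
        have t3 := abs_sub_le (∏ s ∈ Finset.Icc 1 k, bb s)
          (∏ s ∈ Finset.Icc 1 k, (1 - cc s))
          (Real.exp (-(f * ∑ i ∈ Finset.Icc 1 n, θf i)))
        have t4 := abs_sub_le (∏ s ∈ Finset.Icc 1 k, (1 - cc s))
          (Real.exp (-(∑ s ∈ Finset.Icc 1 k, cc s)))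
          (Real.exp (-(f * ∑ i ∈ Finset.Icc 1 n, θf i)))
        linarith
    _ ≤ _ := by
        have := hstep1
        have := hstep2
        have := hstep4
        have := hstep5
        have := hstep6
        linarith

end mainest

set_option maxHeartbeats 4000000

/-- Theorem UniformConvThm, first part: under AIM(xₙ) with
`n·F̄(xₙ) → τ > 0`, `F̄(xₙ) > 0`, block lengths `pₙ` with `pₙ = o(n)`, `n·αₙ = o(pₙ)`,
`qₙ = o(pₙ)`, with `θ_{i,n} = P(M_{i,i+pₙ} ≤ xₙ | X_i > xₙ) → θ_i` pointwise,
`max_{1≤i≤n} |θ_i − θ_{i,n}| → 0`, and Cesàro means of `(θ_i)` converging to `γ`,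
we have `P(Mₙ ≤ xₙ) → e^{−τγ}`. -/
theorem stmt5 {Ω : Type*} [MeasurableSpace Ω] (P : Measure Ω) [IsProbabilityMeasure P]
    (X : ℕ → Ω → ℝ) (F : ℝ → ℝ) (xs : ℕ → ℝ) (q : ℕ → ℕ) (α : ℕ → ℝ) (p : ℕ → ℕ)
    (τ : ℝ) (hτ : 0 < τ)
    (hmeas : ∀ i, Measurable (X i))
    (hF : ∀ i, 1 ≤ i → ∀ t : ℝ, pr P {ω | X i ω ≤ t} = F t)
    (hFbarpos : ∀ n, 0 < 1 - F (xs n))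
    (hqpos : ∀ m, 1 ≤ q m)
    (hq : (fun n : ℕ => (q n : ℝ)) =o[atTop] (fun n : ℕ => (n : ℝ)))
    (hα : Tendsto α atTop (nhds 0))
    (hbd : AIMBound P X xs q α)
    (hFbar : Tendsto (fun n : ℕ => (n : ℝ) * (1 - F (xs n))) atTop (nhds τ))
    (hppos : ∀ m, 1 ≤ p m)
    (hp : (fun n : ℕ => (p n : ℝ)) =o[atTop] (fun n : ℕ => (n : ℝ)))
    (hnα : (fun n : ℕ => (n : ℝ) * α n) =o[atTop] (fun n : ℕ => (p n : ℝ)))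
    (hqp : (fun n : ℕ => (q n : ℝ)) =o[atTop] (fun n : ℕ => (p n : ℝ)))
    (θin : ℕ → ℕ → ℝ)
    (hθin : ∀ i n : ℕ, θin i n =
      pr P ({ω | xs n < X i ω} ∩ allLe X (Set.Icc (i + 1) (i + p n)) (xs n)) /
        pr P {ω | xs n < X i ω})
    (θ : ℕ → ℝ)
    (hθlim : ∀ i : ℕ, 1 ≤ i → Tendsto (fun n => θin i n) atTop (nhds (θ i)))
    (hunif : ∀ ε : ℝ, 0 < ε → ∀ᶠ n : ℕ in atTop,
      ∀ i : ℕ, 1 ≤ i → i ≤ n → |θ i - θin i n| < ε)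
    (γ : ℝ)
    (hcesaro : Tendsto (fun n : ℕ => (n : ℝ)⁻¹ * ∑ i ∈ Finset.Icc 1 n, θ i)
      atTop (nhds γ)) :
    Tendsto (fun n => pr P (allLe X (Set.Icc 1 n) (xs n))) atTop
      (nhds (Real.exp (-(τ * γ)))) := by
  classical
  obtain ⟨f, hfdef⟩ : ∃ f : ℕ → ℝ, f = fun n => 1 - F (xs n) := ⟨_, rfl⟩
  have hfpos : ∀ n, 0 < f n := by rw [hfdef]; exact hFbarpos
  have hFbar' : Tendsto (fun n : ℕ => (n : ℝ) * f n) atTop (nhds τ) := by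
    rw [hfdef]; exact hFbar
  have hmarg : ∀ n i, 1 ≤ i → pr P {ω | xs n < X i ω} = f n := by
    intro n i hi
    have e : {ω | xs n < X i ω} = {ω | X i ω ≤ xs n}ᶜ := by
      ext ω; simp [not_le]
    rw [e, pr_compl P (measurableSet_le (hmeas i) measurable_const), hF i hi, hfdef]
  have hθeq : ∀ n i, 1 ≤ i →
      pr P ({ω | xs n < X i ω} ∩ allLe X (Set.Icc (i+1) (i + p n)) (xs n))
        = f n * θin i n := by
    intro n i hi
    rw [hθin i n, hmarg n i hi]
    field_simp [(hfpos n).ne']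
  have hθnn : ∀ n i, 1 ≤ i → 0 ≤ θin i n := by
    intro n i hi
    rw [hθin i n]
    apply div_nonneg (pr_nonneg P _)
    rw [hmarg n i hi]
    exact (hfpos n).le
  have hθle1 : ∀ n i, 1 ≤ i → θin i n ≤ 1 := by
    intro n i hi
    rw [hθin i n, hmarg n i hi, div_le_one (hfpos n), ← hmarg n i hi]
    exact pr_mono P Set.inter_subset_left
  -- Part A : convergence of the exponent
  have hA1 : Tendsto (fun n : ℕ => f n * ∑ i ∈ Finset.Icc 1 n, θ i) atTop (nhds (τ * γ)) := by
    have h := hFbar'.mul hcesaro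
    apply h.congr'
    filter_upwards [eventually_ge_atTop 1] with n hn
    have hn0 : (n:ℝ) ≠ 0 := by
      have : (1:ℝ) ≤ (n:ℝ) := by exact_mod_cast hn
      linarith
    show ((n:ℝ) * f n) * ((n:ℝ)⁻¹ * ∑ i ∈ Finset.Icc 1 n, θ i)
        = f n * ∑ i ∈ Finset.Icc 1 n, θ i
    have e : ((n:ℝ) * f n) * ((n:ℝ)⁻¹ * ∑ i ∈ Finset.Icc 1 n, θ i)
        = ((n:ℝ) * (n:ℝ)⁻¹) * (f n * ∑ i ∈ Finset.Icc 1 n, θ i) := by ring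
    rw [e, mul_inv_cancel₀ hn0, one_mul]
  have hA2 : Tendsto (fun n : ℕ => f n * ∑ i ∈ Finset.Icc 1 n, (θin i n - θ i)) atTop
      (nhds 0) := by
    rw [Metric.tendsto_atTop]
    intro ε hε
    have hnf : ∀ᶠ n : ℕ in atTop, (n:ℝ) * f n < τ + 1 :=
      hFbar'.eventually_lt_const (by linarith)
    have hu := hunif (ε/(2*(τ+2))) (by positivity)
    rw [Filter.eventually_atTop] at hnf hu
    obtain ⟨N1, hN1⟩ := hnf
    obtain ⟨N2, hN2⟩ := hu
    refine ⟨max (max N1 N2) 1, fun n hn => ?_⟩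
    have hn1 : N1 ≤ n := le_trans (le_trans (le_max_left N1 N2) (le_max_left _ 1)) hn
    have hn2 : N2 ≤ n := le_trans (le_trans (le_max_right N1 N2) (le_max_left _ 1)) hn
    have hn3 : 1 ≤ n := le_trans (le_max_right _ 1) hn
    rw [Real.dist_eq, sub_zero, abs_mul, abs_of_pos (hfpos n)]
    have h1 : |∑ i ∈ Finset.Icc 1 n, (θin i n - θ i)| ≤ (n:ℝ) * (ε/(2*(τ+2))) := by
      calc |∑ i ∈ Finset.Icc 1 n, (θin i n - θ i)|
          ≤ ∑ i ∈ Finset.Icc 1 n, |θin i n - θ i| := Finset.abs_sum_le_sum_abs _ _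
        _ ≤ ∑ i ∈ Finset.Icc 1 n, (ε/(2*(τ+2))) := by
            apply Finset.sum_le_sum
            intro i hi
            rw [Finset.mem_Icc] at hi
            rw [abs_sub_comm]
            exact le_of_lt (hN2 n hn2 i hi.1 hi.2)
        _ = ((Finset.Icc 1 n).card : ℝ) * (ε/(2*(τ+2))) := by
            rw [Finset.sum_const, nsmul_eq_mul]
        _ ≤ (n:ℝ) * (ε/(2*(τ+2))) := by
            apply mul_le_mul_of_nonneg_right _ (by positivity)
            rw [Nat.card_Icc]
            exact_mod_cast (by omega : n + 1 - 1 ≤ n)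
    have h2 : f n * |∑ i ∈ Finset.Icc 1 n, (θin i n - θ i)|
        ≤ (n:ℝ) * f n * (ε/(2*(τ+2))) := by
      have := mul_le_mul_of_nonneg_left h1 (hfpos n).le
      calc f n * |∑ i ∈ Finset.Icc 1 n, (θin i n - θ i)|
          ≤ f n * ((n:ℝ) * (ε/(2*(τ+2)))) := this
        _ = (n:ℝ) * f n * (ε/(2*(τ+2))) := by ring
    have h3 : (n:ℝ) * f n * (ε/(2*(τ+2))) < ε := by
      have hnfn := hN1 n hn1
      have hq1 : 0 < ε/(2*(τ+2)) := by positivity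
      have h4 : (n:ℝ) * f n * (ε/(2*(τ+2))) ≤ (τ+1) * (ε/(2*(τ+2))) := by
        apply mul_le_mul_of_nonneg_right (le_of_lt hnfn) (le_of_lt hq1)
      have h5 : (τ+1) * (ε/(2*(τ+2))) < ε := by
        rw [div_eq_inv_mul]
        have : (0:ℝ) < τ + 2 := by linarith
        rw [mul_comm, mul_assoc]
        have h6 : (2*(τ+2))⁻¹ * (τ+1) < 1/2 := by
          rw [inv_mul_lt_iff₀ (by linarith)]
          nlinarith
        nlinarith
      linarith
    exact lt_of_le_of_lt h2 h3
  have hA : Tendsto (fun n : ℕ => f n * ∑ i ∈ Finset.Icc 1 n, θin i n) atTop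
      (nhds (τ * γ)) := by
    have h := hA1.add hA2
    rw [add_zero] at h
    apply h.congr
    intro n
    rw [← mul_add, ← Finset.sum_add_distrib]
    congr 1
    apply Finset.sum_congr rfl
    intro i _
    ring
  have hExp : Tendsto (fun n : ℕ => Real.exp (-(f n * ∑ i ∈ Finset.Icc 1 n, θin i n)))
      atTop (nhds (Real.exp (-(τ * γ)))) :=
    (Real.continuous_exp.tendsto _).comp hA.neg
  -- main ε-argument
  rw [Metric.tendsto_atTop]
  intro ε hε
  -- choose k
  obtain ⟨k, hkgt⟩ := exists_nat_gt (max (2 * (τ + 1)) (32 * (τ + 1)^2 / ε))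
  have hk1 : 1 ≤ k := by
    by_contra h
    push_neg at h
    interval_cases k
    · simp only [Nat.cast_zero] at hkgt
      have := le_max_left (2*(τ+1)) (32 * (τ + 1)^2 / ε)
      nlinarith
  have hk0 : (0:ℝ) < k := by exact_mod_cast hk1
  have hk2 : 2 * (τ + 1) ≤ (k:ℝ) := le_of_lt (lt_of_le_of_lt (le_max_left _ _) hkgt)
  have hk3 : (τ+1)^2 / (k:ℝ) ≤ ε / 32 := by
    have h1 : 32 * (τ + 1)^2 / ε < (k:ℝ) := lt_of_le_of_lt (le_max_right _ _) hkgt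
    rw [div_le_div_iff₀ hk0 (by norm_num)]
    rw [div_lt_iff₀ hε] at h1
    nlinarith
  obtain ⟨δ, hδdef⟩ : ∃ δ : ℝ, δ = ε / 32 := ⟨_, rfl⟩
  have hδ0 : 0 < δ := by rw [hδdef]; positivity
  obtain ⟨δq, hδqdef⟩ : ∃ δq : ℝ, δq = δ / ((k:ℝ) * (τ + 1)) := ⟨_, rfl⟩
  have hδq0 : 0 < δq := by rw [hδqdef, hδdef]; positivity
  -- eventual facts
  have evnf : ∀ᶠ n : ℕ in atTop, (n:ℝ) * f n < τ + 1 :=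
    hFbar'.eventually_lt_const (by linarith)
  have evα : ∀ᶠ n : ℕ in atTop, (k:ℝ) * |α n| ≤ δ := by
    have h := Metric.tendsto_nhds.mp hα (δ/(k:ℝ)) (by positivity)
    filter_upwards [h] with n hn
    rw [Real.dist_eq, sub_zero] at hn
    have h2 : |α n| ≤ δ/(k:ℝ) := le_of_lt hn
    calc (k:ℝ) * |α n| ≤ (k:ℝ) * (δ/(k:ℝ)) := by
          apply mul_le_mul_of_nonneg_left h2 (le_of_lt hk0)
      _ = δ := by field_simp
  have evnα : ∀ᶠ n : ℕ in atTop, (n:ℝ) * |α n| ≤ δ * (p n : ℝ) := by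
    have h := hnα.def hδ0
    filter_upwards [h] with n hn
    rw [Real.norm_eq_abs, Real.norm_eq_abs, abs_mul, Nat.abs_cast, Nat.abs_cast] at hn
    exact hn
  have evq4 : ∀ᶠ n : ℕ in atTop, (q n : ℝ) ≤ (1/8) * (p n : ℝ) := by
    have h := hqp.def (show (0:ℝ) < 1/8 by norm_num)
    filter_upwards [h] with n hn
    rwa [Real.norm_eq_abs, Real.norm_eq_abs, Nat.abs_cast, Nat.abs_cast] at hn
  have evqq : ∀ᶠ n : ℕ in atTop, (q n : ℝ) ≤ δq * (p n : ℝ) := by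
    have h := hqp.def hδq0
    filter_upwards [h] with n hn
    rwa [Real.norm_eq_abs, Real.norm_eq_abs, Nat.abs_cast, Nat.abs_cast] at hn
  have hpn : Tendsto (fun n : ℕ => (p n : ℝ) / (n : ℝ)) atTop (nhds 0) :=
    hp.tendsto_div_nhds_zero
  have evp3 : ∀ᶠ n : ℕ in atTop, (p n : ℝ) / (n : ℝ) < 1/(3*(k:ℝ)+1) :=
    hpn.eventually_lt_const (by positivity)
  have evpc2 : ∀ᶠ n : ℕ in atTop,
      (k:ℝ) * ((p n : ℝ) / (n:ℝ)) * ((n:ℝ) * f n) < δ := by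
    have hmul : Tendsto (fun n : ℕ => (k:ℝ) * ((p n : ℝ) / (n:ℝ)) * ((n:ℝ) * f n)) atTop
        (nhds ((k:ℝ) * 0 * τ)) :=
      ((tendsto_const_nhds.mul hpn).mul hFbar')
    rw [mul_zero, zero_mul] at hmul
    exact hmul.eventually_lt_const hδ0
  have evA : ∀ᶠ n : ℕ in atTop,
      dist (Real.exp (-(f n * ∑ i ∈ Finset.Icc 1 n, θin i n))) (Real.exp (-(τ * γ)))
        < ε/4 :=
    Metric.tendsto_nhds.mp hExp (ε/4) (by positivity)
  rw [Filter.eventually_atTop] at evnf evα evnα evq4 evqq evp3 evpc2 evA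
  obtain ⟨N1, hN1⟩ := evnf
  obtain ⟨N2, hN2⟩ := evα
  obtain ⟨N3, hN3⟩ := evnα
  obtain ⟨N4, hN4⟩ := evq4
  obtain ⟨N5, hN5⟩ := evqq
  obtain ⟨N6, hN6⟩ := evp3
  obtain ⟨N7, hN7⟩ := evpc2
  obtain ⟨N8, hN8⟩ := evA
  refine ⟨N1+N2+N3+N4+N5+N6+N7+N8+1, fun n hn => ?_⟩
  have c6 : (n:ℝ) * f n ≤ τ + 1 := le_of_lt (hN1 n (by omega))
  have c2 : (k:ℝ) * |α n| ≤ δ := hN2 n (by omega)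
  have c5 : (n:ℝ) * |α n| ≤ δ * (p n : ℝ) := hN3 n (by omega)
  have c3 : (q n : ℝ) ≤ (1/8) * (p n : ℝ) := hN4 n (by omega)
  have c4 : (q n : ℝ) ≤ δq * (p n : ℝ) := hN5 n (by omega)
  have c7' : (p n : ℝ) / (n : ℝ) < 1/(3*(k:ℝ)+1) := hN6 n (by omega)
  have c1' : (k:ℝ) * ((p n : ℝ) / (n:ℝ)) * ((n:ℝ) * f n) < δ := hN7 n (by omega)
  have cA : dist (Real.exp (-(f n * ∑ i ∈ Finset.Icc 1 n, θin i n)))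
      (Real.exp (-(τ * γ))) < ε/4 := hN8 n (by omega)
  have hn1 : 1 ≤ n := by omega
  have hnr0 : (0:ℝ) < (n:ℝ) := by exact_mod_cast hn1
  have hpr1 : (1:ℝ) ≤ (p n : ℝ) := by exact_mod_cast hppos n
  have hqr1 : (1:ℝ) ≤ (q n : ℝ) := by exact_mod_cast hqpos n
  have hpr0 : (0:ℝ) < (p n : ℝ) := by linarith
  have hfr0 : 0 ≤ f n := (hfpos n).le
  -- p n is big
  have hp8 : (8:ℝ) ≤ (p n : ℝ) := by linarith
  have hpqnat : 2 * q n + 2 ≤ p n := by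
    have hr : 2 * (q n : ℝ) + 2 ≤ (p n : ℝ) := by linarith
    exact_mod_cast hr
  -- c1 : k p f ≤ δ
  have c1 : (k:ℝ) * (p n : ℝ) * f n ≤ δ := by
    have e : (k:ℝ) * ((p n : ℝ) / (n:ℝ)) * ((n:ℝ) * f n) = (k:ℝ) * (p n : ℝ) * f n := by
      field_simp
    rw [e] at c1'
    linarith
  -- m and nat facts
  obtain ⟨m, hmdef⟩ : ∃ m : ℕ, m = n / (k * p n) := ⟨_, rfl⟩
  have hkp0 : 0 < k * p n := by
    have := hppos n
    positivity
  have hm3 : 3 ≤ m := by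
    rw [hmdef, Nat.le_div_iff_mul_le hkp0]
    have h3 : (0:ℝ) < 3*(k:ℝ)+1 := by positivity
    have h2 := (div_lt_div_iff₀ hnr0 h3).1 c7'
    have h4 : 3*((k:ℝ)*(p n:ℝ)) ≤ (n:ℝ) := by nlinarith
    have h5 : ((3 * (k * p n) : ℕ) : ℝ) ≤ ((n:ℕ):ℝ) := by push_cast; linarith
    exact_mod_cast h5
  have hkr : k * (m * p n) ≤ n := by
    calc k * (m * p n) = m * (k * p n) := by ring
      _ ≤ n := by rw [hmdef]; exact Nat.div_mul_le_self n (k * p n)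
  have hnr : n < k * (m * p n) + k * p n := by
    have hd := Nat.div_add_mod n (k * p n)
    have hmod := Nat.mod_lt n hkp0
    have e : k * (m * p n) = (k * p n) * m := by ring
    have e2 : (k * p n) * m = (k * p n) * (n / (k * p n)) := by rw [hmdef]
    omega
  -- real versions
  have c7 : (k:ℝ) * ((m:ℝ) * (p n:ℝ)) ≤ (n:ℝ) := by exact_mod_cast hkr
  have hmr0 : (0:ℝ) ≤ (m:ℝ) := by positivity
  have ckmpf : (k:ℝ) * ((m:ℝ) * (p n:ℝ) * f n) ≤ τ + 1 := by
    have h1 : (k:ℝ) * ((m:ℝ) * (p n:ℝ)) * f n ≤ (n:ℝ) * f n :=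
      mul_le_mul_of_nonneg_right c7 hfr0
    calc (k:ℝ) * ((m:ℝ) * (p n:ℝ) * f n) = (k:ℝ) * ((m:ℝ) * (p n:ℝ)) * f n := by ring
      _ ≤ (n:ℝ) * f n := h1
      _ ≤ τ + 1 := c6
  have hmpf0 : 0 ≤ (m:ℝ) * (p n:ℝ) * f n := by positivity
  have chalf : (m:ℝ) * (p n:ℝ) * f n ≤ 1/2 := by
    nlinarith [mul_le_mul_of_nonneg_right hk2 hmpf0, ckmpf, hτ]
  have hhalf : ((m * p n : ℕ) : ℝ) * f n ≤ 1/2 := by push_cast; linarith [chalf]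
  -- bound the error terms
  have c9 : (k:ℝ) * (m:ℝ) * |α n| ≤ δ := by
    have h1 : (k:ℝ) * ((m:ℝ) * (p n:ℝ)) * |α n| ≤ (n:ℝ) * |α n| :=
      mul_le_mul_of_nonneg_right c7 (abs_nonneg _)
    have h2 : (k:ℝ) * (m:ℝ) * |α n| * (p n : ℝ) ≤ δ * (p n : ℝ) := by nlinarith
    exact le_of_mul_le_mul_right h2 hpr0
  have c10 : (k:ℝ) * (q n:ℝ) * (m:ℝ) * f n ≤ δ := by
    have h1 : (k:ℝ) * (q n:ℝ) * (m:ℝ) * f n ≤ (k:ℝ) * (δq * (p n:ℝ)) * (m:ℝ) * f n := by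
      have : (0:ℝ) ≤ (k:ℝ) * (m:ℝ) * f n := by positivity
      nlinarith
    have h2 : (k:ℝ) * (δq * (p n:ℝ)) * (m:ℝ) * f n = δq * ((k:ℝ) * ((m:ℝ) * (p n:ℝ) * f n)) := by
      ring
    have h3 : δq * ((k:ℝ) * ((m:ℝ) * (p n:ℝ) * f n)) ≤ δq * (τ + 1) :=
      mul_le_mul_of_nonneg_left ckmpf (le_of_lt hδq0)
    have h4 : δq * (τ + 1) ≤ δ := by
      rw [hδqdef]
      rw [div_mul_eq_mul_div, div_le_iff₀ (by positivity)]
      have hk1' : (1:ℝ) ≤ (k:ℝ) := by exact_mod_cast hk1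
      have hδτ : 0 < δ * (τ + 1) := by positivity
      nlinarith [hδτ, hk1']
    linarith
  have c11 : (k:ℝ) * ((m:ℝ) * (p n:ℝ) * f n)^2 ≤ ε/32 := by
    have h1 : (k:ℝ) * ((m:ℝ) * (p n:ℝ) * f n)^2 ≤ (τ+1)^2 / (k:ℝ) := by
      rw [le_div_iff₀ hk0]
      have h0 : (0:ℝ) ≤ (k:ℝ) * ((m:ℝ) * (p n:ℝ) * f n) := by positivity
      have hsq := mul_le_mul ckmpf ckmpf h0 (by linarith)
      nlinarith [hsq]
    linarith [hk3]
  have cqp : (q n : ℝ) * f n ≤ (p n : ℝ) * f n :=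
    mul_le_mul_of_nonneg_right (by linarith) hfr0
  have ckqf : (k:ℝ) * ((q n:ℝ) * f n) ≤ δ := by
    calc (k:ℝ) * ((q n:ℝ) * f n) ≤ (k:ℝ) * ((p n:ℝ) * f n) := by
          apply mul_le_mul_of_nonneg_left _ (le_of_lt hk0)
          exact cqp
      _ = (k:ℝ) * (p n:ℝ) * f n := by ring
      _ ≤ δ := c1
  -- assemble the bound on hmain's RHS
  have hB : ((k * p n : ℕ) : ℝ) * f n + (k : ℝ) * (|α n| + (q n : ℝ) * f n)
        + (k : ℝ) * ((m : ℝ) * (((p n:ℝ) * f n) * (((m * p n : ℕ) : ℝ) * f n) + 2 * |α n|) +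
            ((2 * p n + 2 * q n * m : ℕ) : ℝ) * f n)
        + (k : ℝ) * (((m * p n : ℕ) : ℝ) * f n)^2
        + ((3 * k * p n + 2 * k * q n * m : ℕ) : ℝ) * f n ≤ ε/2 := by
    push_cast
    have t1 : (k:ℝ) * (p n:ℝ) * f n ≤ δ := c1
    have t2 : (k:ℝ) * |α n| ≤ δ := c2
    have t3 : (k:ℝ) * ((m:ℝ) * (((p n:ℝ) * f n) * ((m:ℝ) * (p n:ℝ) * f n)))
        ≤ ε/32 := by
      have e : (k:ℝ) * ((m:ℝ) * (((p n:ℝ) * f n) * ((m:ℝ) * (p n:ℝ) * f n)))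
          = (k:ℝ) * ((m:ℝ) * (p n:ℝ) * f n)^2 := by ring
      rw [e]
      exact c11
    have t4 : (k:ℝ) * ((m:ℝ) * (2 * |α n|)) ≤ 2 * δ := by
      have e : (k:ℝ) * ((m:ℝ) * (2 * |α n|)) = 2 * ((k:ℝ) * (m:ℝ) * |α n|) := by ring
      rw [e]
      linarith
    have t5 : (k:ℝ) * ((2 * (p n:ℝ) + 2 * (q n:ℝ) * (m:ℝ)) * f n) ≤ 4 * δ := by
      have e : (k:ℝ) * ((2 * (p n:ℝ) + 2 * (q n:ℝ) * (m:ℝ)) * f n)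
          = 2 * ((k:ℝ) * (p n:ℝ) * f n) + 2 * ((k:ℝ) * (q n:ℝ) * (m:ℝ) * f n) := by ring
      rw [e]
      linarith
    have t6 : (k:ℝ) * ((m:ℝ) * (p n:ℝ) * f n)^2 ≤ ε/32 := c11
    have t7 : 3 * (k:ℝ) * (p n:ℝ) * f n ≤ 3 * δ := by linarith
    have t8 : 2 * (k:ℝ) * (q n:ℝ) * (m:ℝ) * f n ≤ 2 * δ := by
      have e : 2 * (k:ℝ) * (q n:ℝ) * (m:ℝ) * f n = 2 * ((k:ℝ) * (q n:ℝ) * (m:ℝ) * f n) := by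
        ring
      rw [e]
      linarith
    have hδe : δ = ε/32 := hδdef
    linarith [t1, t2, t3, t4, t5, t6, t7, t8, ckqf]
  -- apply the main estimate
  have hmain := main_est P X (xs n) (f n) hmeas hfr0 (fun i hi => hmarg n i hi)
    n (q n) (p n) (α n) (hbd n) (fun i => θin i n) (fun j hj => hθeq n j hj)
    (fun j hj => hθnn n j hj) (fun j hj => hθle1 n j hj)
    k m hk1 (hqpos n) hpqnat hm3 hkr hnr hhalf
  -- final triangle inequality
  have hmain2 : |pr P (allLe X (Set.Icc 1 n) (xs n)) -
      Real.exp (-(f n * ∑ i ∈ Finset.Icc 1 n, θin i n))| ≤ ε/2 := le_trans hmain hB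
  rw [Real.dist_eq]
  rw [Real.dist_eq] at cA
  calc |pr P (allLe X (Set.Icc 1 n) (xs n)) - Real.exp (-(τ * γ))|
      ≤ |pr P (allLe X (Set.Icc 1 n) (xs n)) -
          Real.exp (-(f n * ∑ i ∈ Finset.Icc 1 n, θin i n))|
        + |Real.exp (-(f n * ∑ i ∈ Finset.Icc 1 n, θin i n)) - Real.exp (-(τ * γ))| :=
        abs_sub_le _ _ _
    _ < ε/2 + ε/4 := add_lt_add_of_le_of_lt hmain2 cA
    _ < ε := by linarith
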